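/- Let f, h be complex numbers with |f| ≤ 1 and |h| ≤ 1, let g = (f + h)/2, and let 0 < k < 1/8. Then |g + k(f - h)²| ≤ 1. -/
import Mathlib


theorem stmt_7 (f h : ℂ) (hf : ‖f‖ ≤ 1) (hh : ‖h‖ ≤ 1) (k : ℝ) (hk : 0 < k) (hk' : k < 1/8) :
    ‖(f + h) / 2 + (k : ℂ) * (f - h) ^ 2‖ ≤ 1 := by
  have par : ‖f + h‖ ^ 2 + ‖f - h‖ ^ 2 = 2 * (‖f‖ ^ 2 + ‖h‖ ^ 2) := by
    have := parallelogram_law_with_norm ℝ f h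
    nlinarith [this]
  have htri : ‖(f + h) / 2 + (k : ℂ) * (f - h) ^ 2‖ ≤ ‖f + h‖ / 2 + k * ‖f - h‖ ^ 2 := by
    calc ‖(f + h) / 2 + (k : ℂ) * (f - h) ^ 2‖ ≤ ‖(f + h) / 2‖ + ‖(k : ℂ) * (f - h) ^ 2‖ :=
          norm_add_le _ _
      _ = ‖f + h‖ / 2 + k * ‖f - h‖ ^ 2 := by
          simp [norm_div, norm_mul, norm_pow, Complex.norm_real, abs_of_pos hk]
  have h1 : (0:ℝ) ≤ ‖f + h‖ := norm_nonneg _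
  have h2 : (0:ℝ) ≤ ‖f - h‖ := norm_nonneg _
  nlinarith [sq_nonneg (‖f‖ - ‖h‖), sq_nonneg (1 - ‖f + h‖ / 2), norm_nonneg f, norm_nonneg h,
    mul_nonneg hk.le (sq_nonneg (‖f - h‖)), mul_nonneg hk.le (sq_nonneg (1 - ‖f+h‖/2))]
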